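/- Let S ⊆ (0,∞). Every finite ultrametric space X with nonzero distances in S embeds isometrically into a finite convexly order-invariant ultrametric space Y with nonzero distances in S. -/

import Mathlib

/-- A finite ultrametric space with all nonzero distances in `S`. -/
structure FinUltra (S : Set ℝ) where
  n : ℕ
  d : Fin n → Fin n → ℝ
  d_self : ∀ x, d x x = 0
  d_symm : ∀ x y, d x y = d y x
  d_mem : ∀ x y, x ≠ y → d x y ∈ S
  ultra : ∀ x y z, d x z ≤ max (d x y) (d y z)

/-- `r` is a strict total order (irreflexive, transitive, trichotomous). -/
def IsSTO {X : Type*} (r : X → X → Prop) : Prop :=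
  (∀ x, ¬ r x x) ∧ (∀ x y z, r x y → r y z → r x z) ∧ (∀ x y, r x y ∨ x = y ∨ r y x)

/-- `r` is a convex linear ordering with respect to the distance `d` : a strict total
order for which every closed metric ball is an interval (equivalently,
`r x y → r y z → d x y ≤ d x z ∧ d y z ≤ d x z`). -/
def IsConvexSTO {X : Type*} (d : X → X → ℝ) (r : X → X → Prop) : Prop :=
  IsSTO r ∧ ∀ x y z, r x y → r y z → d x y ≤ d x z ∧ d y z ≤ d x z

/-- `A` is a copy of the ordered space `(X, rX)` inside `(Z, rZ)` : the image of an
isometric, order-preserving embedding. -/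
def IsOrdCopy {S : Set ℝ} (X Z : FinUltra S) (rX : Fin X.n → Fin X.n → Prop)
    (rZ : Fin Z.n → Fin Z.n → Prop) (A : Set (Fin Z.n)) : Prop :=
  ∃ f : Fin X.n → Fin Z.n, Set.range f = A ∧
    (∀ a b, Z.d (f a) (f b) = X.d a b) ∧ (∀ a b, rX a b → rZ (f a) (f b))

/-- `A` is an isometric copy of `X` inside `Z`. -/
def IsCopy {S : Set ℝ} (X Z : FinUltra S) (A : Set (Fin Z.n)) : Prop :=
  ∃ f : Fin X.n → Fin Z.n, Set.range f = A ∧ ∀ a b, Z.d (f a) (f b) = X.d a b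

/-- The number τ(X) = |cLO(X)| / |iso(X)|. -/
noncomputable def tau (S : Set ℝ) (X : FinUltra S) : ℕ :=
  Nat.card {r : Fin X.n → Fin X.n → Prop // IsConvexSTO X.d r} /
    Nat.card {g : Fin X.n ≃ Fin X.n // ∀ a b, X.d (g a) (g b) = X.d a b}

/-- `Y` is convexly order-invariant: any two convex linear orderings on `Y` are
isomorphic via a bijective self-isometry. -/
def ConvOrdInv {S : Set ℝ} (Y : FinUltra S) : Prop :=
  ∀ r₁ r₂ : Fin Y.n → Fin Y.n → Prop, IsConvexSTO Y.d r₁ → IsConvexSTO Y.d r₂ →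
    ∃ g : Fin Y.n ≃ Fin Y.n, (∀ a b, Y.d (g a) (g b) = Y.d a b) ∧
      ∀ a b, r₁ a b → r₂ (g a) (g b)


section aux
variable {n : ℕ}

def dk : (k : ℕ) → (Fin k → ℝ) → (Fin k → Fin n) → (Fin k → Fin n) → ℝ
  | 0, _, _, _ => 0
  | _+1, s, u, v =>
    if u 0 = v 0 then dk _ (Fin.tail s) (Fin.tail u) (Fin.tail v) else s 0

lemma dk_succ {k : ℕ} (s : Fin (k+1) → ℝ) (u v : Fin (k+1) → Fin n) :
    dk (k+1) s u v
      = if u 0 = v 0 then dk k (Fin.tail s) (Fin.tail u) (Fin.tail v) else s 0 := rfl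

lemma dk_self : ∀ (k : ℕ) (s : Fin k → ℝ) (u : Fin k → Fin n), dk k s u u = 0
  | 0, _, _ => rfl
  | k+1, s, u => by rw [dk_succ, if_pos rfl, dk_self]

lemma dk_symm : ∀ (k : ℕ) (s : Fin k → ℝ) (u v : Fin k → Fin n),
    dk k s u v = dk k s v u
  | 0, _, _, _ => rfl
  | k+1, s, u, v => by
      rw [dk_succ, dk_succ, dk_symm]
      by_cases h : u 0 = v 0
      · rw [if_pos h, if_pos h.symm]
      · rw [if_neg h, if_neg (fun h' => h h'.symm)]

lemma dk_cases : ∀ (k : ℕ) (s : Fin k → ℝ) (u v : Fin k → Fin n),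
    dk k s u v = 0 ∨ ∃ i, dk k s u v = s i
  | 0, _, _, _ => Or.inl rfl
  | k+1, s, u, v => by
      rw [dk_succ]
      by_cases h : u 0 = v 0
      · rw [if_pos h]
        rcases dk_cases k (Fin.tail s) (Fin.tail u) (Fin.tail v) with h'|⟨i, h'⟩
        · exact Or.inl h'
        · exact Or.inr ⟨i.succ, h'⟩
      · exact Or.inr ⟨0, by rw [if_neg h]⟩

lemma dk_ne : ∀ (k : ℕ) (s : Fin k → ℝ) (u v : Fin k → Fin n), u ≠ v →
    ∃ i, dk k s u v = s i
  | 0, _, u, v, h => absurd (funext fun i => i.elim0) h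
  | k+1, s, u, v, h => by
      rw [dk_succ]
      by_cases h0 : u 0 = v 0
      · rw [if_pos h0]
        have ht : Fin.tail u ≠ Fin.tail v := by
          intro he
          exact h (funext fun i => i.cases h0 (fun j => congrFun he j))
        obtain ⟨i, hi⟩ := dk_ne k (Fin.tail s) (Fin.tail u) (Fin.tail v) ht
        exact ⟨i.succ, hi⟩
      · exact ⟨0, by rw [if_neg h0]⟩

lemma tail_strictAnti {k : ℕ} {s : Fin (k+1) → ℝ} (hs : StrictAnti s) :
    StrictAnti (Fin.tail s) := fun i j h => hs (Fin.succ_lt_succ_iff.mpr h)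

lemma dk_lt_head {k : ℕ} {s : Fin (k+1) → ℝ} (hs : StrictAnti s)
    (hpos : ∀ i, 0 < s i) (u v : Fin k → Fin n) :
    dk k (Fin.tail s) u v < s 0 := by
  rcases dk_cases k (Fin.tail s) u v with h|⟨i, h⟩
  · rw [h]; exact hpos 0
  · rw [h]; exact hs i.succ_pos

lemma dk_ultra : ∀ (k : ℕ) (s : Fin k → ℝ), StrictAnti s → (∀ i, 0 < s i) →
    ∀ u v w : Fin k → Fin n, dk k s u w ≤ max (dk k s u v) (dk k s v w)
  | 0, _, _, _, _, _, _ => by simp [dk]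
  | k+1, s, hs, hpos, u, v, w => by
      have hpt : ∀ i, 0 < Fin.tail s i := fun i => hpos i.succ
      rw [dk_succ, dk_succ, dk_succ]
      by_cases h1 : u 0 = v 0 <;> by_cases h2 : v 0 = w 0
      · rw [if_pos h1, if_pos h2, if_pos (h1.trans h2)]
        exact dk_ultra k (Fin.tail s) (tail_strictAnti hs) hpt _ _ _
      · have h3 : u 0 ≠ w 0 := fun h => h2 (h1.symm.trans h)
        rw [if_pos h1, if_neg h2, if_neg h3]
        exact le_max_right _ _
      · have h3 : u 0 ≠ w 0 := fun h => h1 (h.trans h2.symm)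
        rw [if_neg h1, if_pos h2, if_neg h3]
        exact le_max_left _ _
      · rw [if_neg h1, if_neg h2]
        by_cases h3 : u 0 = w 0
        · rw [if_pos h3]
          exact le_trans (dk_lt_head hs hpos _ _).le (le_max_left _ _)
        · rw [if_neg h3]; exact le_max_left _ _

lemma dk_cons_cons {k : ℕ} (s : Fin (k+1) → ℝ) (a b : Fin n)
    (x y : Fin k → Fin n) :
    dk (k+1) s (Fin.cons a x) (Fin.cons b y)
      = if a = b then dk k (Fin.tail s) x y else s 0 := by
  rw [dk_succ]; simp

end aux




open Finset in
lemma sto_iso {m : ℕ} {p q : Fin m → Fin m → Prop} (hp : IsSTO p) (hq : IsSTO q) :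
    ∃ σ : Fin m ≃ Fin m, ∀ a b, p a b → q (σ a) (σ b) := by
  classical
  obtain ⟨pirr, ptrans, ptri⟩ := hp
  obtain ⟨qirr, qtrans, qtri⟩ := hq
  -- counting function for a STO
  have cntlt : ∀ (r : Fin m → Fin m → Prop) (_ : ∀ x, ¬ r x x) (a : Fin m),
      (univ.filter (fun b => r b a)).card < m := by
    intro r rirr a
    calc (univ.filter (fun b => r b a)).card
        ≤ (univ.erase a).card := by
          apply card_le_card
          intro b hb
          rw [mem_filter] at hb
          exact mem_erase.mpr ⟨fun h => rirr a (h ▸ hb.2), mem_univ b⟩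
      _ < m := by rw [card_erase_of_mem (mem_univ a), card_univ, Fintype.card_fin]
                  exact Nat.sub_lt a.pos Nat.one_pos
  set cp : Fin m → Fin m := fun a => ⟨(univ.filter (fun b => p b a)).card, cntlt p pirr a⟩
    with hcp
  set cq : Fin m → Fin m := fun a => ⟨(univ.filter (fun b => q b a)).card, cntlt q qirr a⟩
    with hcq
  have key : ∀ (r : Fin m → Fin m → Prop), (∀ x, ¬ r x x) →
      (∀ x y z, r x y → r y z → r x z) → (∀ x y, r x y ∨ x = y ∨ r y x) →
      ∀ a b, r a b →
      (univ.filter (fun c => r c a)).card < (univ.filter (fun c => r c b)).card := by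
    intro r rirr rtrans rtri a b hab
    apply card_lt_card
    rw [ssubset_iff_of_subset]
    · exact ⟨a, by simp [hab], by simp [rirr a]⟩
    · intro c hc
      simp only [mem_filter, mem_univ, true_and] at hc ⊢
      exact rtrans c a b hc hab
  have hpc : ∀ a b, p a b ↔ cp a < cp b := by
    intro a b
    constructor
    · intro h; exact key p pirr ptrans ptri a b h
    · intro h
      rcases ptri a b with h'|h'|h'
      · exact h'
      · exact absurd h (by rw [h']; exact lt_irrefl _)
      · exact absurd (key p pirr ptrans ptri b a h') (by
          simp only [Fin.lt_def, hcp] at h ⊢; omega)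
  have hqc : ∀ a b, q a b ↔ cq a < cq b := by
    intro a b
    constructor
    · intro h; exact key q qirr qtrans qtri a b h
    · intro h
      rcases qtri a b with h'|h'|h'
      · exact h'
      · exact absurd h (by rw [h']; exact lt_irrefl _)
      · exact absurd (key q qirr qtrans qtri b a h') (by
          simp only [Fin.lt_def, hcq] at h ⊢; omega)
  have cpinj : Function.Bijective cp := by
    apply Finite.injective_iff_bijective.mp
    intro a b hab
    rcases ptri a b with h|h|h
    · exact absurd ((hpc a b).mp h) (by rw [hab]; exact lt_irrefl _)
    · exact h
    · exact absurd ((hpc b a).mp h) (by rw [hab]; exact lt_irrefl _)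
  have cqinj : Function.Bijective cq := by
    apply Finite.injective_iff_bijective.mp
    intro a b hab
    rcases qtri a b with h|h|h
    · exact absurd ((hqc a b).mp h) (by rw [hab]; exact lt_irrefl _)
    · exact h
    · exact absurd ((hqc b a).mp h) (by rw [hab]; exact lt_irrefl _)
  refine ⟨(Equiv.ofBijective cp cpinj).trans (Equiv.ofBijective cq cqinj).symm, ?_⟩
  intro a b hab
  apply (hqc _ _).mpr
  have e1 : cq ((Equiv.ofBijective cq cqinj).symm (cp a)) = cp a :=
    (Equiv.ofBijective cq cqinj).apply_symm_apply (cp a)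
  have e2 : cq ((Equiv.ofBijective cq cqinj).symm (cp b)) = cp b :=
    (Equiv.ofBijective cq cqinj).apply_symm_apply (cp b)
  simpa [Equiv.trans_apply, Equiv.ofBijective_apply, e1, e2] using (hpc a b).mp hab

section main
variable {n : ℕ}

lemma head_determines {k : ℕ} {s : Fin (k+1) → ℝ} (hs : StrictAnti s)
    (hpos : ∀ i, 0 < s i) {r : (Fin (k+1) → Fin n) → (Fin (k+1) → Fin n) → Prop}
    (hr : IsConvexSTO (dk (k+1) s) r) {a b : Fin n} (hab : a ≠ b)
    {x y : Fin k → Fin n} (h : r (Fin.cons a x) (Fin.cons b y)) :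
    ∀ x' y', r (Fin.cons a x') (Fin.cons b y') := by
  obtain ⟨⟨irr, htrans, tri⟩, hconv⟩ := hr
  have cons_ne : ∀ (c d : Fin n) (z w : Fin k → Fin n),
      Fin.cons (α := fun _ => Fin n) c z = Fin.cons d w → c = d := by
    intro c d z w hcd
    have := congrFun hcd 0
    simpa using this
  have step1 : ∀ x', r (Fin.cons a x') (Fin.cons b y) := by
    intro x'
    rcases tri (Fin.cons a x') (Fin.cons b y) with h'|h'|h'
    · exact h'
    · exact absurd (cons_ne _ _ _ _ h') hab
    · exfalso
      have hc := (hconv _ _ _ h h').1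
      rw [dk_cons_cons, dk_cons_cons, if_neg hab, if_pos rfl] at hc
      exact absurd hc (not_le.mpr (dk_lt_head hs hpos _ _))
  intro x' y'
  rcases tri (Fin.cons a x') (Fin.cons b y') with h'|h'|h'
  · exact h'
  · exact absurd (cons_ne _ _ _ _ h') hab
  · exfalso
    have hc := (hconv _ _ _ h' (step1 x')).2
    rw [dk_cons_cons, dk_cons_cons, if_neg hab, if_pos rfl] at hc
    exact absurd hc (not_le.mpr (dk_lt_head hs hpos _ _))

lemma fiber_convex {k : ℕ} {s : Fin (k+1) → ℝ}
    {r : (Fin (k+1) → Fin n) → (Fin (k+1) → Fin n) → Prop}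
    (hr : IsConvexSTO (dk (k+1) s) r) (a : Fin n) :
    IsConvexSTO (dk k (Fin.tail s))
      (fun x y => r (Fin.cons a x) (Fin.cons a y)) := by
  obtain ⟨⟨irr, htrans, tri⟩, hconv⟩ := hr
  refine ⟨⟨fun x => irr _, fun x y z h1 h2 => htrans _ _ _ h1 h2, ?_⟩, ?_⟩
  · intro x y
    rcases tri (Fin.cons a x) (Fin.cons a y) with h|h|h
    · exact Or.inl h
    · refine Or.inr (Or.inl ?_)
      have := congrArg Fin.tail h
      rwa [Fin.tail_cons, Fin.tail_cons] at this
    · exact Or.inr (Or.inr h)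
  · intro x y z h1 h2
    have := hconv _ _ _ h1 h2
    rwa [dk_cons_cons, dk_cons_cons, dk_cons_cons, if_pos rfl, if_pos rfl,
      if_pos rfl] at this

lemma main_lemma (hn : 0 < n) : ∀ (k : ℕ) (s : Fin k → ℝ), StrictAnti s →
    (∀ i, 0 < s i) →
    ∀ r₁ r₂ : (Fin k → Fin n) → (Fin k → Fin n) → Prop,
      IsConvexSTO (dk k s) r₁ → IsConvexSTO (dk k s) r₂ →
    ∃ g : (Fin k → Fin n) ≃ (Fin k → Fin n),
      (∀ u v, dk k s (g u) (g v) = dk k s u v) ∧ ∀ u v, r₁ u v → r₂ (g u) (g v) := by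
  intro k
  induction k with
  | zero =>
    intro s _ _ r₁ r₂ h₁ _
    refine ⟨Equiv.refl _, fun u v => rfl, fun u v h => ?_⟩
    have huv : u = v := funext fun i => i.elim0
    exact absurd (huv ▸ h) (h₁.1.1 v)
  | succ k IH =>
    intro s hs hpos r₁ r₂ h₁ h₂
    have hst : StrictAnti (Fin.tail s) := tail_strictAnti hs
    have hpt : ∀ i, 0 < Fin.tail s i := fun i => hpos i.succ
    set z₀ : Fin k → Fin n := fun _ => ⟨0, hn⟩ with hz₀
    set rb₁ : Fin n → Fin n → Prop :=
      fun a b => a ≠ b ∧ r₁ (Fin.cons a z₀) (Fin.cons b z₀) with hrb₁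
    set rb₂ : Fin n → Fin n → Prop :=
      fun a b => a ≠ b ∧ r₂ (Fin.cons a z₀) (Fin.cons b z₀) with hrb₂
    have cons_ne : ∀ (c d : Fin n) (z w : Fin k → Fin n),
        Fin.cons (α := fun _ => Fin n) c z = Fin.cons d w → c = d := by
      intro c d z w hcd
      have := congrFun hcd 0
      simpa using this
    have rbSTO : ∀ (r : (Fin (k+1) → Fin n) → (Fin (k+1) → Fin n) → Prop),
        IsConvexSTO (dk (k+1) s) r →
        IsSTO (fun a b => a ≠ b ∧ r (Fin.cons a z₀) (Fin.cons b z₀)) := by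
      intro r hr
      obtain ⟨⟨irr, htrans, tri⟩, _⟩ := hr
      refine ⟨fun a h => h.1 rfl, ?_, ?_⟩
      · rintro a b c ⟨hab, h1⟩ ⟨hbc, h2⟩
        refine ⟨?_, htrans _ _ _ h1 h2⟩
        rintro rfl
        exact irr _ (htrans _ _ _ h1 h2)
      · intro a b
        by_cases hab : a = b
        · exact Or.inr (Or.inl hab)
        · rcases tri (Fin.cons a z₀) (Fin.cons b z₀) with h|h|h
          · exact Or.inl ⟨hab, h⟩
          · exact absurd (cons_ne _ _ _ _ h) hab
          · exact Or.inr (Or.inr ⟨fun h' => hab h'.symm, h⟩)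
    obtain ⟨σ, hσ⟩ := sto_iso (rbSTO r₁ h₁) (rbSTO r₂ h₂)
    have Hfib : ∀ a : Fin n,
        ∃ g : (Fin k → Fin n) ≃ (Fin k → Fin n),
          (∀ u v, dk k (Fin.tail s) (g u) (g v) = dk k (Fin.tail s) u v) ∧
          ∀ u v, r₁ (Fin.cons a u) (Fin.cons a v) →
            r₂ (Fin.cons (σ a) (g u)) (Fin.cons (σ a) (g v)) := by
      intro a
      exact IH (Fin.tail s) hst hpt _ _ (fiber_convex h₁ a) (fiber_convex h₂ (σ a))
    choose g hg1 hg2 using Hfib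
    refine ⟨⟨fun u => Fin.cons (σ (u 0)) (g (u 0) (Fin.tail u)),
      fun v => Fin.cons (σ.symm (v 0)) ((g (σ.symm (v 0))).symm (Fin.tail v)),
      ?_, ?_⟩, ?_, ?_⟩
    · intro u
      simp only [Fin.cons_zero, Fin.tail_cons, Equiv.symm_apply_apply]
      exact Fin.cons_self_tail u
    · intro v
      simp only [Fin.cons_zero, Fin.tail_cons, Equiv.apply_symm_apply]
      exact Fin.cons_self_tail v
    · intro u v
      simp only [Equiv.coe_fn_mk]
      rw [dk_cons_cons, dk_succ]
      by_cases h0 : u 0 = v 0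
      · rw [if_pos h0, if_pos (congrArg σ h0)]
        rw [h0]
        exact hg1 (v 0) _ _
      · rw [if_neg h0, if_neg (fun h => h0 (σ.injective h))]
    · intro u v h
      simp only [Equiv.coe_fn_mk]
      by_cases h0 : u 0 = v 0
      · have h' : r₁ (Fin.cons (u 0) (Fin.tail u)) (Fin.cons (u 0) (Fin.tail v)) := by
          rw [Fin.cons_self_tail, h0, Fin.cons_self_tail]
          exact h
        have := hg2 (u 0) _ _ h'
        rw [h0] at this ⊢
        exact this
      · have h' : r₁ (Fin.cons (u 0) (Fin.tail u)) (Fin.cons (v 0) (Fin.tail v)) := by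
          rw [Fin.cons_self_tail, Fin.cons_self_tail]
          exact h
        have hb1 : rb₁ (u 0) (v 0) :=
          ⟨h0, head_determines hs hpos h₁ h0 h' z₀ z₀⟩
        have hb2 : rb₂ (σ (u 0)) (σ (v 0)) := hσ _ _ hb1
        exact head_determines hs hpos h₂ hb2.1 hb2.2 _ _

end main

section emb
variable {S : Set ℝ}

noncomputable def Fx (X : FinUltra S) {k : ℕ} (s : Fin k → ℝ)
    (hpos : ∀ i, 0 < s i) (x : Fin X.n) : Fin k → Fin X.n := fun i =>
  Finset.min' (Finset.univ.filter (fun z => X.d z x < s i))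
    ⟨x, by simp [X.d_self x, hpos i]⟩

lemma Fx_eq_iff (X : FinUltra S) {k : ℕ} (s : Fin k → ℝ)
    (hpos : ∀ i, 0 < s i) (x y : Fin X.n) (i : Fin k) :
    Fx X s hpos x i = Fx X s hpos y i ↔ X.d x y < s i := by
  constructor
  · intro h
    have hx : Fx X s hpos x i ∈ Finset.univ.filter (fun z => X.d z x < s i) := by
      unfold Fx; exact Finset.min'_mem _ _
    have hy : Fx X s hpos y i ∈ Finset.univ.filter (fun z => X.d z y < s i) := by
      unfold Fx; exact Finset.min'_mem _ _
    rw [Finset.mem_filter] at hx hy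
    calc X.d x y ≤ max (X.d x (Fx X s hpos x i)) (X.d (Fx X s hpos x i) y) :=
          X.ultra _ _ _
      _ < s i := by
          apply max_lt
          · rw [X.d_symm]; exact hx.2
          · rw [h]; exact hy.2
  · intro h
    have hset : Finset.univ.filter (fun z => X.d z x < s i)
        = Finset.univ.filter (fun z => X.d z y < s i) := by
      ext z
      simp only [Finset.mem_filter, Finset.mem_univ, true_and]
      constructor
      · intro hz
        calc X.d z y ≤ max (X.d z x) (X.d x y) := X.ultra _ _ _
          _ < s i := max_lt hz h
      · intro hz
        calc X.d z x ≤ max (X.d z y) (X.d y x) := X.ultra _ _ _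
          _ < s i := max_lt hz (by rw [X.d_symm] at h; exact h)
    simp only [Fx, hset]

lemma Fx_tail (X : FinUltra S) {k : ℕ} (s : Fin (k+1) → ℝ)
    (hpos : ∀ i, 0 < s i) (x : Fin X.n) :
    Fin.tail (Fx X s hpos x) = Fx X (Fin.tail s) (fun i => hpos i.succ) x := rfl

lemma emb_lemma (X : FinUltra S) : ∀ (k : ℕ) (s : Fin k → ℝ), StrictAnti s →
    ∀ (hpos : ∀ i, 0 < s i), ∀ x y : Fin X.n, (x = y ∨ ∃ i, X.d x y = s i) →
    dk k s (Fx X s hpos x) (Fx X s hpos y) = X.d x y := by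
  intro k
  induction k with
  | zero =>
    intro s _ _ x y hxy
    rcases hxy with rfl|⟨i, _⟩
    · rw [X.d_self]; rfl
    · exact i.elim0
  | succ k IH =>
    intro s hs hpos x y hxy
    rw [dk_succ]
    by_cases h0 : X.d x y < s 0
    · rw [if_pos ((Fx_eq_iff X s hpos x y 0).mpr h0), Fx_tail, Fx_tail]
      apply IH (Fin.tail s) (tail_strictAnti hs) (fun i => hpos i.succ)
      rcases hxy with rfl|⟨i, hi⟩
      · exact Or.inl rfl
      · refine Or.inr ?_
        refine i.cases ?_ (fun j => ?_) hi <;> intro hi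
        · exact absurd h0 (by rw [hi]; exact lt_irrefl _)
        · exact ⟨j, hi⟩
    · rw [if_neg (fun h => h0 ((Fx_eq_iff X s hpos x y 0).mp h))]
      rcases hxy with rfl|⟨i, hi⟩
      · exact absurd (by rw [X.d_self]; exact hpos 0) h0
      · rw [hi]
        rcases eq_or_lt_of_le (Fin.zero_le i) with h|h
        · rw [← h]
        · exact absurd (hs h) (hi ▸ h0)

end emb

/-- Every finite ultrametric space with distances in `S` embeds isometrically into a
convexly order-invariant one. -/
theorem embeds_into_convOrdInv
    (S : Set ℝ) (hSpos : ∀ s ∈ S, 0 < s) (X : FinUltra S) :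
    ∃ Y : FinUltra S, ConvOrdInv Y ∧
      ∃ f : Fin X.n → Fin Y.n, ∀ a b, Y.d (f a) (f b) = X.d a b := by
  classical
  rcases Nat.eq_zero_or_pos X.n with hn|hn
  · refine ⟨X, ?_, id, fun a b => rfl⟩
    intro r₁ r₂ _ _
    refine ⟨Equiv.refl _, fun a b => rfl, fun a b h => ?_⟩
    have := a.isLt
    omega
  · set D : Finset ℝ :=
      (Finset.univ.filter (fun p : Fin X.n × Fin X.n => p.1 ≠ p.2)).image
        (fun p => X.d p.1 p.2) with hD
    set k := D.card with hk
    set iso := D.orderIsoOfFin (rfl : D.card = k) with hiso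
    set s : Fin k → ℝ := fun i => (iso (Fin.rev i) : ℝ) with hs'
    have hsanti : StrictAnti s := by
      intro i j hij
      have h' : Fin.rev j < Fin.rev i := Fin.rev_lt_rev.mpr hij
      exact_mod_cast iso.strictMono h'
    have hmemS : ∀ i, s i ∈ S := by
      intro i
      have hiD : s i ∈ D := (iso (Fin.rev i)).2
      rw [hD, Finset.mem_image] at hiD
      obtain ⟨p, hp, hval⟩ := hiD
      rw [Finset.mem_filter] at hp
      rw [← hval]
      exact X.d_mem p.1 p.2 hp.2
    have hpos : ∀ i, 0 < s i := fun i => hSpos _ (hmemS i)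
    have hsurj : ∀ x y : Fin X.n, x ≠ y → ∃ i, X.d x y = s i := by
      intro x y hxy
      have hmem : X.d x y ∈ D := by
        rw [hD, Finset.mem_image]
        exact ⟨(x, y), Finset.mem_filter.mpr ⟨Finset.mem_univ _, hxy⟩, rfl⟩
      obtain ⟨j, hj⟩ := iso.surjective ⟨X.d x y, hmem⟩
      refine ⟨Fin.rev j, ?_⟩
      rw [hs']
      simp only [Fin.rev_rev, hj]
    set e : (Fin k → Fin X.n) ≃ Fin (X.n ^ k) := finFunctionFinEquiv with he
    set Y : FinUltra S :=
      { n := X.n ^ k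
        d := fun i j => dk k s (e.symm i) (e.symm j)
        d_self := fun i => dk_self k s _
        d_symm := fun i j => dk_symm k s _ _
        d_mem := by
          intro i j hij
          obtain ⟨m, hm⟩ := dk_ne k s (e.symm i) (e.symm j)
            (fun h => hij (by simpa using congrArg e h))
          show dk k s (e.symm i) (e.symm j) ∈ S
          rw [hm]
          exact hmemS m
        ultra := fun i j l => dk_ultra k s hsanti hpos _ _ _ } with hY
    have pull : ∀ r : Fin Y.n → Fin Y.n → Prop,
        IsConvexSTO Y.d r → IsConvexSTO (dk k s) (fun u v => r (e u) (e v)) := by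
      rintro r ⟨⟨irr, htr, tri⟩, hconv⟩
      refine ⟨⟨fun u => irr _, fun u v w h1 h2 => htr _ _ _ h1 h2, ?_⟩, ?_⟩
      · intro u v
        rcases tri (e u) (e v) with h|h|h
        · exact Or.inl h
        · exact Or.inr (Or.inl (e.injective h))
        · exact Or.inr (Or.inr h)
      · intro u v w h1 h2
        have hc := hconv _ _ _ h1 h2
        simpa [hY, e.symm_apply_apply] using (show dk k s (e.symm (e u)) (e.symm (e v)) ≤ dk k s (e.symm (e u)) (e.symm (e w)) ∧ dk k s (e.symm (e v)) (e.symm (e w)) ≤ dk k s (e.symm (e u)) (e.symm (e w)) from hc)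
    refine ⟨Y, ?_, ?_⟩
    · intro r₁ r₂ h₁ h₂
      obtain ⟨g, hg1, hg2⟩ := main_lemma hn k s hsanti hpos
        (fun u v => r₁ (e u) (e v)) (fun u v => r₂ (e u) (e v))
        (pull r₁ h₁) (pull r₂ h₂)
      refine ⟨(e.symm.trans g).trans e, fun a b => ?_, fun a b h => ?_⟩
      · show dk k s (e.symm (e (g (e.symm a)))) (e.symm (e (g (e.symm b)))) = _
        rw [e.symm_apply_apply, e.symm_apply_apply]
        exact hg1 _ _
      · show r₂ (e (g (e.symm a))) (e (g (e.symm b)))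
        apply hg2
        show r₁ (e (e.symm a)) (e (e.symm b))
        rw [e.apply_symm_apply, e.apply_symm_apply]
        exact h
    · refine ⟨fun x => e (Fx X s hpos x), fun a b => ?_⟩
      show dk k s (e.symm (e _)) (e.symm (e _)) = X.d a b
      rw [e.symm_apply_apply, e.symm_apply_apply]
      apply emb_lemma X k s hsanti hpos
      by_cases hab : a = b
      · exact Or.inl hab
      · exact Or.inr (hsurj a b hab)
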